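/- For i = 1, 2 let u_i ∈ Lip(ℝ^N) and z_i ∈ 𝓜⁺(C_r) with z_i(C_r) ≤ 1 satisfy ∫_{C_r} (u_i(x) − u_i(y)) dz_i(x,y) = osc_{B_r} u_i. Let ψ, g₁, g₂: ℝ → ℝ be continuous and monotone nondecreasing, and set v₁₂ := ψ(g₁(u₁) − g₂(u₂)). Then ∫_{C_r} (v₁₂(x) − v₁₂(y)) d(z₁ − z₂)(x,y) ≥ 0. -/

import Mathlib

open MeasureTheory Metric Filter Topology Bornology Set
open scoped ENNReal NNReal

noncomputable section

/-- `N`-dimensional Euclidean space. -/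
abbrev Euc (N : ℕ) := EuclideanSpace ℝ (Fin N)

variable {N : ℕ}

/-- The essential oscillation of `u` over `A` (ess sup minus ess inf), with values in `[0,∞]`. -/
def osc (u : Euc N → ℝ) (A : Set (Euc N)) : ℝ≥0∞ :=
  essSup (fun p : Euc N × Euc N => ENNReal.ofReal (u p.1 - u p.2))
    ((volume.restrict A).prod (volume.restrict A))

/-- The set `C_r = B̄_r × B̄_r`. -/
def Cr (N : ℕ) (r : ℝ) : Set (Euc N × Euc N) := closedBall 0 r ×ˢ closedBall 0 r


lemma isCompact_Cr (r : ℝ) : IsCompact (Cr N r) :=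
  (isCompact_closedBall _ _).prod (isCompact_closedBall _ _)

lemma ae_mem_Cr {r : ℝ} {z : Measure (Euc N × Euc N)} (hsupp : z (Cr N r)ᶜ = 0) :
    ∀ᵐ q ∂z, q ∈ Cr N r := by
  rw [MeasureTheory.ae_iff]
  exact hsupp

lemma integrable_aux {r : ℝ} {z : Measure (Euc N × Euc N)} [IsFiniteMeasure z]
    (hsupp : z (Cr N r)ᶜ = 0) {f : Euc N × Euc N → ℝ} (hf : Continuous f) :
    Integrable f z := by
  obtain ⟨C, hC⟩ := (isCompact_Cr (N := N) r).exists_bound_of_continuousOn hf.continuousOn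
  refine ⟨hf.aestronglyMeasurable, HasFiniteIntegral.of_bounded (C := C) ?_⟩
  filter_upwards [ae_mem_Cr hsupp] with q hq using hC q hq

lemma osc_lower (r : ℝ) (hr : 0 < r) {u : Euc N → ℝ} (hu : Continuous u)
    {x₀ y₀ : Euc N} (hx₀ : x₀ ∈ closedBall (0 : Euc N) r) (hy₀ : y₀ ∈ closedBall (0 : Euc N) r) :
    ENNReal.ofReal (u x₀ - u y₀) ≤ osc u (ball (0 : Euc N) r) := by
  have claim : ∀ c : ℝ, c < u x₀ - u y₀ → ENNReal.ofReal c ≤ osc u (ball (0 : Euc N) r) := by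
    intro c hc
    set ε : ℝ := (u x₀ - u y₀ - c) / 2 with hε
    have hεpos : 0 < ε := by simp only [hε]; linarith
    set U : Set (Euc N) := u ⁻¹' Ioi (u x₀ - ε) with hU
    set V : Set (Euc N) := u ⁻¹' Iio (u y₀ + ε) with hV
    have hUo : IsOpen U := isOpen_Ioi.preimage hu
    have hVo : IsOpen V := isOpen_Iio.preimage hu
    have hxU : x₀ ∈ U := by simp [hU]; linarith
    have hyV : y₀ ∈ V := by simp [hV]; linarith
    have hclo : closure (ball (0 : Euc N) r) = closedBall (0 : Euc N) r :=
      closure_ball 0 hr.ne'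
    have hsne : (U ∩ ball (0 : Euc N) r).Nonempty := by
      have : x₀ ∈ closure (ball (0 : Euc N) r) := hclo ▸ hx₀
      exact _root_.mem_closure_iff.mp this U hUo hxU
    have htne : (V ∩ ball (0 : Euc N) r).Nonempty := by
      have : y₀ ∈ closure (ball (0 : Euc N) r) := hclo ▸ hy₀
      exact _root_.mem_closure_iff.mp this V hVo hyV
    set μ : Measure (Euc N) := volume.restrict (ball (0 : Euc N) r) with hμ
    set s := U ∩ ball (0 : Euc N) r
    set t := V ∩ ball (0 : Euc N) r
    have hso : IsOpen s := hUo.inter isOpen_ball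
    have hto : IsOpen t := hVo.inter isOpen_ball
    have hμs : μ s ≠ 0 := by
      rw [hμ, Measure.restrict_apply hso.measurableSet,
        inter_eq_self_of_subset_left inter_subset_right]
      exact (hso.measure_pos volume hsne).ne'
    have hμt : μ t ≠ 0 := by
      rw [hμ, Measure.restrict_apply hto.measurableSet,
        inter_eq_self_of_subset_left inter_subset_right]
      exact (hto.measure_pos volume htne).ne'
    by_contra hlt
    push_neg at hlt
    have hae := ae_lt_of_essSup_lt hlt
    have hsub : s ×ˢ t ⊆ {p : Euc N × Euc N |
        ¬ (fun p : Euc N × Euc N => ENNReal.ofReal (u p.1 - u p.2)) p < ENNReal.ofReal c} := by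
      rintro ⟨a, b⟩ ⟨⟨ha, _⟩, ⟨hb, _⟩⟩
      simp only [mem_setOf_eq, not_lt]
      apply ENNReal.ofReal_le_ofReal
      have h1 : u x₀ - ε < u a := ha
      have h2 : u b < u y₀ + ε := hb
      simp only [hε] at h1 h2 ⊢
      linarith
    have h0 : (μ.prod μ) (s ×ˢ t) = 0 :=
      measure_mono_null hsub (MeasureTheory.ae_iff.mp hae)
    rw [Measure.prod_prod] at h0
    exact (mul_ne_zero hμs hμt) h0
  rcases le_or_gt (u x₀ - u y₀) 0 with hD | hD
  · simp [ENNReal.ofReal_eq_zero.mpr hD]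
  · by_contra hlt
    push_neg at hlt
    obtain ⟨e, he1, he2⟩ := exists_between hlt
    have hetop : e ≠ ⊤ := (he2.trans ENNReal.ofReal_lt_top).ne
    have : e.toReal < u x₀ - u y₀ := by
      rw [← ENNReal.ofReal_toReal hetop] at he2
      exact (ENNReal.ofReal_lt_ofReal_iff hD).mp he2
    have := claim e.toReal this
    rw [ENNReal.ofReal_toReal hetop] at this
    exact absurd he1 (not_lt.mpr this)

lemma concentration (r : ℝ) (hr : 0 < r) {u : Euc N → ℝ} (hu : Continuous u)
    {z : Measure (Euc N × Euc N)} [IsFiniteMeasure z]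
    (hsupp : z (Cr N r)ᶜ = 0) (hmass : z Set.univ ≤ 1)
    (hcal : ENNReal.ofReal (∫ q : Euc N × Euc N, (u q.1 - u q.2) ∂z)
      = osc u (ball (0 : Euc N) r))
    {x₀ y₀ : Euc N} (hx₀m : x₀ ∈ closedBall (0 : Euc N) r)
    (hy₀m : y₀ ∈ closedBall (0 : Euc N) r)
    (hx₀ : ∀ p ∈ closedBall (0 : Euc N) r, u p ≤ u x₀)
    (hy₀ : ∀ p ∈ closedBall (0 : Euc N) r, u y₀ ≤ u p) :
    (∀ᵐ q ∂z, u q.1 = u x₀ ∧ u q.2 = u y₀) ∧ (u y₀ < u x₀ → (z Set.univ).toReal = 1) := by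
  have hmem := ae_mem_Cr hsupp
  have ht1 : (z Set.univ).toReal ≤ 1 := by
    have := ENNReal.toReal_mono ENNReal.one_ne_top hmass
    simpa using this
  have ht0 : 0 ≤ (z Set.univ).toReal := ENNReal.toReal_nonneg
  rcases le_or_gt (u x₀) (u y₀) with hle | hD
  · have hconst : ∀ p ∈ closedBall (0 : Euc N) r, u p = u x₀ := fun p hp =>
      le_antisymm (hx₀ p hp) (le_trans (le_trans hle (hy₀ p hp)) le_rfl)
    have hxy : u x₀ = u y₀ := le_antisymm hle (hy₀ x₀ hx₀m)
    constructor
    · filter_upwards [hmem] with q hq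
      obtain ⟨hq1, hq2⟩ := hq
      exact ⟨hconst q.1 hq1, (hconst q.2 hq2).trans hxy⟩
    · intro h; exact absurd hle (not_le.mpr h)
  · set D : ℝ := u x₀ - u y₀ with hDdef
    have hDpos : 0 < D := by simp [hDdef]; linarith
    have hf : Continuous fun q : Euc N × Euc N => u q.1 - u q.2 :=
      (hu.comp continuous_fst).sub (hu.comp continuous_snd)
    have hint : Integrable (fun q : Euc N × Euc N => u q.1 - u q.2) z :=
      integrable_aux hsupp hf
    have hboundae : ∀ᵐ q ∂z, u q.1 - u q.2 ≤ D := by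
      filter_upwards [hmem] with q hq
      obtain ⟨hq1, hq2⟩ := hq
      have := hx₀ q.1 hq1
      have := hy₀ q.2 hq2
      simp only [hDdef]; linarith
    set I : ℝ := ∫ q : Euc N × Euc N, (u q.1 - u q.2) ∂z with hIdef
    have hIle : I ≤ D * (z Set.univ).toReal := by
      have := integral_mono_ae hint (integrable_const D) hboundae
      rw [integral_const] at this
      simpa [mul_comm, measureReal_def] using this
    have hIleD : I ≤ D := hIle.trans (by nlinarith)
    have hoge : ENNReal.ofReal D ≤ ENNReal.ofReal I := by
      rw [hcal]; exact osc_lower r hr hu hx₀m hy₀m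
    have hIeq : I = D := by
      have h1 : ENNReal.ofReal I ≤ ENNReal.ofReal D := ENNReal.ofReal_le_ofReal hIleD
      have heq := le_antisymm h1 hoge
      have hIpos : 0 < I := by
        by_contra hIc
        push_neg at hIc
        rw [ENNReal.ofReal_eq_zero.mpr hIc] at heq
        exact (ENNReal.ofReal_pos.mpr hDpos).ne' heq.symm
      exact (ENNReal.ofReal_eq_ofReal_iff hIpos.le hDpos.le).mp heq
    set g : Euc N × Euc N → ℝ := fun q => D - (u q.1 - u q.2) with hg
    have hgint : Integrable g z := (integrable_const D).sub hint
    have hgnn : 0 ≤ᵐ[z] g := by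
      filter_upwards [hboundae] with q hq
      simp only [hg, Pi.zero_apply]; linarith
    have hgI : ∫ q, g q ∂z = D * (z Set.univ).toReal - D := by
      simp only [hg]
      rw [integral_sub (integrable_const D) hint, integral_const, ← hIdef, hIeq]
      simp [mul_comm, measureReal_def]
    have hgle : ∫ q, g q ∂z ≤ 0 := by rw [hgI]; nlinarith
    have hgge : 0 ≤ ∫ q, g q ∂z := integral_nonneg_of_ae hgnn
    have hg0 : ∫ q, g q ∂z = 0 := le_antisymm hgle hgge
    have hgae : g =ᵐ[z] 0 := (integral_eq_zero_iff_of_nonneg_ae hgnn hgint).mp hg0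
    constructor
    · filter_upwards [hmem, hgae] with q hq hq0
      obtain ⟨hq1, hq2⟩ := hq
      have h1 := hx₀ q.1 hq1
      have h2 := hy₀ q.2 hq2
      have : D - (u q.1 - u q.2) = 0 := hq0
      constructor <;> [skip; skip] <;> simp only [hDdef] at this <;> linarith
    · intro _
      rw [hgI] at hg0
      nlinarith

/-- Monotonicity of generalised Cahn–Hoffman measures: if, for `i = 1,2`, `u_i` is Lipschitz and
`z_i ∈ 𝓜⁺(C_r)` with `z_i(C_r) ≤ 1` satisfies the calibration identity for `u_i`, then for any
continuous nondecreasing `ψ, g₁, g₂` and `v₁₂ := ψ(g₁(u₁) − g₂(u₂))` one has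
`∫_{C_r} (v₁₂(x) − v₁₂(y)) d(z₁ − z₂) ≥ 0`. -/
theorem statement4 (N : ℕ) (r : ℝ) (hr : 0 < r)
    (u₁ u₂ : Euc N → ℝ) (hu₁ : ∃ K, LipschitzWith K u₁) (hu₂ : ∃ K, LipschitzWith K u₂)
    (z₁ z₂ : Measure (Euc N × Euc N))
    (hsupp₁ : z₁ (Cr N r)ᶜ = 0) (hsupp₂ : z₂ (Cr N r)ᶜ = 0)
    (hmass₁ : z₁ Set.univ ≤ 1) (hmass₂ : z₂ Set.univ ≤ 1)
    (hcal₁ : ENNReal.ofReal (∫ q : Euc N × Euc N, (u₁ q.1 - u₁ q.2) ∂z₁)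
      = osc u₁ (ball (0 : Euc N) r))
    (hcal₂ : ENNReal.ofReal (∫ q : Euc N × Euc N, (u₂ q.1 - u₂ q.2) ∂z₂)
      = osc u₂ (ball (0 : Euc N) r))
    (ψ g₁ g₂ : ℝ → ℝ)
    (hψc : Continuous ψ) (hg₁c : Continuous g₁) (hg₂c : Continuous g₂)
    (hψm : Monotone ψ) (hg₁m : Monotone g₁) (hg₂m : Monotone g₂) :
    ∫ q : Euc N × Euc N,
        (ψ (g₁ (u₁ q.1) - g₂ (u₂ q.1)) - ψ (g₁ (u₁ q.2) - g₂ (u₂ q.2))) ∂z₂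
      ≤ ∫ q : Euc N × Euc N,
        (ψ (g₁ (u₁ q.1) - g₂ (u₂ q.1)) - ψ (g₁ (u₁ q.2) - g₂ (u₂ q.2))) ∂z₁ := by
  obtain ⟨K₁, hL₁⟩ := hu₁
  obtain ⟨K₂, hL₂⟩ := hu₂
  have hc₁ : Continuous u₁ := hL₁.continuous
  have hc₂ : Continuous u₂ := hL₂.continuous
  haveI : IsFiniteMeasure z₁ := ⟨hmass₁.trans_lt ENNReal.one_lt_top⟩
  haveI : IsFiniteMeasure z₂ := ⟨hmass₂.trans_lt ENNReal.one_lt_top⟩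
  have hKc : IsCompact (closedBall (0 : Euc N) r) := isCompact_closedBall _ _
  have hKne : (closedBall (0 : Euc N) r).Nonempty := ⟨0, by simp [hr.le]⟩
  obtain ⟨x₁, hx₁m, hx₁⟩ := hKc.exists_isMaxOn hKne hc₁.continuousOn
  obtain ⟨y₁, hy₁m, hy₁⟩ := hKc.exists_isMinOn hKne hc₁.continuousOn
  obtain ⟨x₂, hx₂m, hx₂⟩ := hKc.exists_isMaxOn hKne hc₂.continuousOn
  obtain ⟨y₂, hy₂m, hy₂⟩ := hKc.exists_isMinOn hKne hc₂.continuousOn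
  have hx₁' : ∀ p ∈ closedBall (0 : Euc N) r, u₁ p ≤ u₁ x₁ := isMaxOn_iff.mp hx₁
  have hy₁' : ∀ p ∈ closedBall (0 : Euc N) r, u₁ y₁ ≤ u₁ p := isMinOn_iff.mp hy₁
  have hx₂' : ∀ p ∈ closedBall (0 : Euc N) r, u₂ p ≤ u₂ x₂ := isMaxOn_iff.mp hx₂
  have hy₂' : ∀ p ∈ closedBall (0 : Euc N) r, u₂ y₂ ≤ u₂ p := isMinOn_iff.mp hy₂
  obtain ⟨hae₁, hm₁⟩ := concentration r hr hc₁ hsupp₁ hmass₁ hcal₁ hx₁m hy₁m hx₁' hy₁'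
  obtain ⟨hae₂, hm₂⟩ := concentration r hr hc₂ hsupp₂ hmass₂ hcal₂ hx₂m hy₂m hx₂' hy₂'
  set c : ℝ := ψ (g₁ (u₁ x₁) - g₂ (u₂ x₂)) - ψ (g₁ (u₁ y₁) - g₂ (u₂ y₂)) with hcdef
  set F : Euc N × Euc N → ℝ :=
    fun q => ψ (g₁ (u₁ q.1) - g₂ (u₂ q.1)) - ψ (g₁ (u₁ q.2) - g₂ (u₂ q.2)) with hF
  have hv : Continuous (fun x : Euc N => ψ (g₁ (u₁ x) - g₂ (u₂ x))) :=
    hψc.comp ((hg₁c.comp hc₁).sub (hg₂c.comp hc₂))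
  have hFc : Continuous F :=
    (hv.comp continuous_fst).sub (hv.comp continuous_snd)
  have hFint₁ : Integrable F z₁ := integrable_aux hsupp₁ hFc
  have hFint₂ : Integrable F z₂ := integrable_aux hsupp₂ hFc
  set t₁ : ℝ := (z₁ Set.univ).toReal with ht₁
  set t₂ : ℝ := (z₂ Set.univ).toReal with ht₂
  have ht₁le : t₁ ≤ 1 := by
    simpa using ENNReal.toReal_mono ENNReal.one_ne_top hmass₁
  have ht₂le : t₂ ≤ 1 := by
    simpa using ENNReal.toReal_mono ENNReal.one_ne_top hmass₂
  have ht₁0 : 0 ≤ t₁ := ENNReal.toReal_nonneg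
  have ht₂0 : 0 ≤ t₂ := ENNReal.toReal_nonneg
  -- lower bound a.e. z₁
  have hlow : ∀ᵐ q ∂z₁, c ≤ F q := by
    filter_upwards [hae₁, ae_mem_Cr hsupp₁] with q hq hmem
    obtain ⟨hq1, hq2⟩ := hq
    obtain ⟨hm1, hm2⟩ := hmem
    have h1 : ψ (g₁ (u₁ x₁) - g₂ (u₂ x₂)) ≤ ψ (g₁ (u₁ q.1) - g₂ (u₂ q.1)) := by
      apply hψm
      rw [hq1]
      have := hg₂m (hx₂' q.1 hm1)
      linarith
    have h2 : ψ (g₁ (u₁ q.2) - g₂ (u₂ q.2)) ≤ ψ (g₁ (u₁ y₁) - g₂ (u₂ y₂)) := by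
      apply hψm
      rw [hq2]
      have := hg₂m (hy₂' q.2 hm2)
      linarith
    simp only [hF, hcdef]
    linarith
  -- upper bound a.e. z₂
  have hhigh : ∀ᵐ q ∂z₂, F q ≤ c := by
    filter_upwards [hae₂, ae_mem_Cr hsupp₂] with q hq hmem
    obtain ⟨hq1, hq2⟩ := hq
    obtain ⟨hm1, hm2⟩ := hmem
    have h1 : ψ (g₁ (u₁ q.1) - g₂ (u₂ q.1)) ≤ ψ (g₁ (u₁ x₁) - g₂ (u₂ x₂)) := by
      apply hψm
      rw [hq1]
      have := hg₁m (hx₁' q.1 hm1)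
      linarith
    have h2 : ψ (g₁ (u₁ y₁) - g₂ (u₂ y₂)) ≤ ψ (g₁ (u₁ q.2) - g₂ (u₂ q.2)) := by
      apply hψm
      rw [hq2]
      have := hg₁m (hy₁' q.2 hm2)
      linarith
    simp only [hF, hcdef]
    linarith
  have hI₁ : t₁ * c ≤ ∫ q, F q ∂z₁ := by
    have := integral_mono_ae (integrable_const c) hFint₁ hlow
    rwa [integral_const, smul_eq_mul, measureReal_def, ← ht₁] at this
  have hI₂ : ∫ q, F q ∂z₂ ≤ t₂ * c := by
    have := integral_mono_ae hFint₂ (integrable_const c) hhigh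
    rwa [integral_const, smul_eq_mul, measureReal_def, ← ht₂] at this
  have key : t₂ * c ≤ t₁ * c := by
    rcases lt_trichotomy c 0 with hc | hc | hc
    · -- c < 0 forces u₂ y₂ < u₂ x₂, hence t₂ = 1
      have hlt : g₁ (u₁ x₁) - g₂ (u₂ x₂) < g₁ (u₁ y₁) - g₂ (u₂ y₂) :=
        hψm.reflect_lt (by simpa [hcdef] using hc)
      have hg1 : g₁ (u₁ y₁) ≤ g₁ (u₁ x₁) := hg₁m (hx₁' y₁ hy₁m)
      have hg2 : g₂ (u₂ y₂) < g₂ (u₂ x₂) := by linarith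
      have hu2 : u₂ y₂ < u₂ x₂ := hg₂m.reflect_lt hg2
      have := hm₂ hu2
      rw [this]
      nlinarith
    · simp [hc]
    · have hlt : g₁ (u₁ y₁) - g₂ (u₂ y₂) < g₁ (u₁ x₁) - g₂ (u₂ x₂) :=
        hψm.reflect_lt (by simpa [hcdef] using hc)
      have hg2 : g₂ (u₂ y₂) ≤ g₂ (u₂ x₂) := hg₂m (hx₂' y₂ hy₂m)
      have hg1 : g₁ (u₁ y₁) < g₁ (u₁ x₁) := by linarith
      have hu1 : u₁ y₁ < u₁ x₁ := hg₁m.reflect_lt hg1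
      have := hm₁ hu1
      rw [this]
      nlinarith
  calc ∫ q, F q ∂z₂ ≤ t₂ * c := hI₂
    _ ≤ t₁ * c := key
    _ ≤ ∫ q, F q ∂z₁ := hI₁
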